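/- Let (θ_i, θ*_i, i=0..d; φ_j, φ'_j, j=1..d) be a parameter array with d ≥ 1, and set ϑ_i = ∑_{h=0}^{i-1}(θ*_h - θ*_{d-h})/(θ*_0 - θ*_d). Then θ_i = θ_0 + (φ_i - φ'_d ϑ_i)/(θ*_{i-1} - θ*_d) for 1 ≤ i ≤ d, and θ_i = θ_d + (φ_{i+1} - φ'_1 ϑ_{i+1})/(θ*_{i+1} - θ*_0) for 0 ≤ i ≤ d-1. -/
import Mathlib


open Finset

section ChebHelpers

variable {K : Type*} [Field K]

/-- Pair `(u'ₙ, uₙ)` of Chebyshev-like sequences: `u₀ = 0, u'₀ = -1`,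
`u'_{n+1} = uₙ`, `u_{n+1} = B uₙ - u'ₙ`. -/
def chebUV (B : K) : ℕ → K × K
  | 0 => (-1, 0)
  | n+1 => ((chebUV B n).2, B * (chebUV B n).2 - (chebUV B n).1)

def uvF (B : K) (n : ℕ) : K := (chebUV B n).1
def uuF (B : K) (n : ℕ) : K := (chebUV B n).2

def aaF (B : K) : ℕ → K
  | 0 => 0
  | n+1 => aaF B n + uuF B n

def bbF (B : K) : ℕ → K
  | 0 => 0
  | n+1 => bbF B n + uvF B n

lemma uv_zero (B : K) : uvF B 0 = -1 := rfl
lemma uu_zero (B : K) : uuF B 0 = 0 := rfl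
lemma uv_succ (B : K) (n : ℕ) : uvF B (n+1) = uuF B n := rfl
lemma uu_succ (B : K) (n : ℕ) : uuF B (n+1) = B * uuF B n - uvF B n := rfl
lemma aa_zero (B : K) : aaF B 0 = 0 := rfl
lemma bb_zero (B : K) : bbF B 0 = 0 := rfl
lemma aa_succ (B : K) (n : ℕ) : aaF B (n+1) = aaF B n + uuF B n := rfl
lemma bb_succ (B : K) (n : ℕ) : bbF B (n+1) = bbF B n + uvF B n := rfl

lemma two_step {P : ℕ → Prop} (h0 : P 0) (h1 : P 1)
    (hstep : ∀ n, P n → P (n+1) → P (n+1+1)) : ∀ n, P n := by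
  have key : ∀ n, P n ∧ P (n+1) := by
    intro n
    induction n with
    | zero => exact ⟨h0, h1⟩
    | succ k ih => exact ⟨ih.2, hstep k ih.1 ih.2⟩
  exact fun n => (key n).1

/-- Bundle of orbit invariants. -/
lemma PAinv (B : K) : ∀ n,
    aaF B n * uvF B n - bbF B n * uuF B n - aaF B n - uuF B n = 0 ∧
    (aaF B n + uuF B n) * uuF B n - (bbF B n + uvF B n) * (B * uuF B n - uvF B n)
      - aaF B n - uuF B n - B * uuF B n + uvF B n = 0 ∧
    (bbF B n + uvF B n + uuF B n) * (1 + uuF B n)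
      - (aaF B n + (B + 1) * uuF B n - uvF B n) * uvF B n = 0 ∧
    uuF B n ^ 2 + uvF B n ^ 2 - B * (uuF B n * uvF B n) - 1 = 0 ∧
    (B - 2) * aaF B n - uuF B n + uvF B n + 1 = 0 := by
  intro n
  induction n with
  | zero =>
    simp only [uu_zero, uv_zero, aa_zero, bb_zero]
    refine ⟨by ring, by ring, by ring, by ring, by ring⟩
  | succ m ih =>
    obtain ⟨h1, h2, h3, h4, h5⟩ := ih
    simp only [uu_succ, uv_succ, aa_succ, bb_succ]
    refine ⟨?_, ?_, ?_, ?_, ?_⟩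
    · linear_combination h2
    · linear_combination (-1 : K) * h1 + B * h2 + h4 + h5
    · linear_combination h1 - h2 + h3
    · linear_combination h4
    · linear_combination h5

lemma PAN (B : K) (n : ℕ) :
    aaF B (n+1) * (uvF B n - 1) = bbF B (n+1) * uuF B n := by
  have h := (PAinv B n).1
  simp only [aa_succ, bb_succ]
  linear_combination h

lemma PAP (B : K) (n : ℕ) :
    aaF B (n+1) * uvF B (n+1) - bbF B (n+1) * uuF B (n+1) = aaF B (n+1+1) := by
  have h := (PAinv B n).2.1
  simp only [aa_succ, bb_succ, uu_succ, uv_succ]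
  linear_combination h

lemma PAM (B : K) (n : ℕ) :
    bbF B (n+1+1) * (1 + uuF B n) = aaF B (n+1+1) * uvF B n := by
  have h := (PAinv B n).2.2.1
  simp only [aa_succ, bb_succ, uu_succ, uv_succ]
  linear_combination h

/-- Chebyshev addition formula. -/
lemma PAadd (B : K) : ∀ i, ∀ j,
    uuF B i * uvF B (i+j) - uvF B i * uuF B (i+j) = uuF B j := by
  refine two_step ?_ ?_ ?_
  · intro j
    rw [Nat.zero_add, uu_zero, uv_zero]
    ring
  · intro j
    rw [show (1 : ℕ) + j = j + 1 by omega]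
    rw [show uuF B 1 = B * uuF B 0 - uvF B 0 from rfl,
        show uvF B 1 = uuF B 0 from rfl, uu_zero, uv_zero, uu_succ, uv_succ]
    ring
  · intro n ihn ihn1 j
    have h1 := ihn1 (j+1)
    have h0 := ihn (j+1+1)
    rw [show n+1+(j+1) = n+j+1+1 by omega] at h1
    rw [show n+(j+1+1) = n+j+1+1 by omega] at h0
    rw [show n+1+1+j = n+j+1+1 by omega]
    simp only [uu_succ, uv_succ] at h0 h1 ⊢
    linear_combination B * h1 - h0

/-- Symmetric two-point identity. -/
lemma PAT (B : K) : ∀ i, ∀ j,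
    bbF B (i+j+1) * (uuF B i + uuF B j) = aaF B (i+j+1) * (uvF B i + uvF B j) := by
  refine two_step ?_ ?_ ?_
  · intro j
    rw [Nat.zero_add, uu_zero, uv_zero]
    linear_combination (-1 : K) * PAN B j
  · intro j
    rw [show (1 : ℕ)+j+1 = j+1+1 by omega]
    rw [show uuF B 1 = B * uuF B 0 - uvF B 0 from rfl,
        show uvF B 1 = uuF B 0 from rfl, uu_zero, uv_zero]
    linear_combination PAM B j
  · intro n ihn ihn1 j
    have h1 := ihn1 (j+1)
    have h0 := ihn (j+1+1)
    rw [show n+1+(j+1)+1 = n+j+1+1+1 by omega] at h1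
    rw [show n+(j+1+1)+1 = n+j+1+1+1 by omega] at h0
    rw [show n+1+1+j+1 = n+j+1+1+1 by omega]
    simp only [uu_succ, uv_succ] at h0 h1 ⊢
    linear_combination B * h1 - h0

/-- Cross identity for `aa`/`bb`. -/
lemma PAJ (B : K) : ∀ i, ∀ j,
    bbF B (i+j) * (aaF B j - aaF B i) = aaF B (i+j) * (bbF B j - bbF B i) := by
  intro i
  induction i with
  | zero =>
    intro j
    rw [Nat.zero_add, aa_zero, bb_zero]
    ring
  | succ n ih =>
    intro j
    have h := ih (j+1)
    have hT := PAT B n j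
    rw [show n+(j+1) = n+j+1 by omega] at h
    rw [show n+1+j = n+j+1 by omega]
    simp only [aa_succ, bb_succ, uu_succ, uv_succ] at h hT ⊢
    linear_combination h - hT

/-- The key step identity for the `Ia` sum formula. -/
lemma PAE (B : K) : ∀ k j,
    aaF B (k+1+1) * (bbF B (k+j+1+1) - bbF B (k+1))
      - bbF B (k+1+1) * (aaF B (k+j+1+1) - aaF B (k+1))
      - aaF B (k+1) * (bbF B (k+j+1+1) - bbF B k)
      + bbF B (k+1) * (aaF B (k+j+1+1) - aaF B k)
    = aaF B (j+1) - aaF B (k+1) := by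
  intro k j
  induction j with
  | zero =>
    have hN0 := PAN B k
    have hN1 := PAN B (k+1)
    have hP := PAP B k
    rw [show k+0+1+1 = k+1+1 by omega]
    simp only [aa_succ, bb_succ, uu_succ, uv_succ, aa_zero, bb_zero, uu_zero,
      uv_zero] at hN0 hN1 hP ⊢
    linear_combination hN1 - hN0 - hP
  | succ m ih =>
    have hAdd := PAadd B (k+1) (m+1)
    rw [show k+1+(m+1) = k+m+1+1 by omega] at hAdd
    rw [show k+m+1+1 = k+m+1+1 by omega] at ih
    rw [show k+(m+1)+1+1 = k+m+1+1+1 by omega]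
    simp only [aa_succ, bb_succ, uu_succ, uv_succ] at hAdd ih ⊢
    linear_combination ih + hAdd

end ChebHelpers

/-- A parameter array of diameter `d` over `K`:
scalars `θ 0,…,θ d`, `θs 0,…,θs d`, `φ 1,…,φ d`, `φp 1,…,φp d`
satisfying conditions (i)–(v) of the classification theorem. -/
def IsParameterArray (K : Type*) [Field K] (d : ℕ) (θ θs φ φp : ℕ → K) : Prop :=
  (∀ i, 1 ≤ i → i ≤ d → φ i ≠ 0 ∧ φp i ≠ 0) ∧
  (∀ i j, i ≤ d → j ≤ d → i ≠ j → θ i ≠ θ j ∧ θs i ≠ θs j) ∧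
  (∀ i, 1 ≤ i → i ≤ d →
    φ i = φp 1 * (∑ h ∈ Finset.range i, (θ h - θ (d - h)) / (θ 0 - θ d))
      + (θs i - θs 0) * (θ (i - 1) - θ d)) ∧
  (∀ i, 1 ≤ i → i ≤ d →
    φp i = φ 1 * (∑ h ∈ Finset.range i, (θ h - θ (d - h)) / (θ 0 - θ d))
      + (θs i - θs 0) * (θ (d - i + 1) - θ 0)) ∧
  (∃ β : K, ∀ i, 2 ≤ i → i + 1 ≤ d →
    (θ (i - 2) - θ (i + 1)) / (θ (i - 1) - θ i) = β ∧
    (θs (i - 2) - θs (i + 1)) / (θs (i - 1) - θs i) = β)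

theorem parameter_array_theta_formulas {K : Type*} [Field K] (d : ℕ) (hd : 1 ≤ d)
    (θ θs φ φp : ℕ → K) (hpa : IsParameterArray K d θ θs φ φp) :
    (∀ i, 1 ≤ i → i ≤ d →
      θ i = θ 0 +
        (φ i - φp d * (∑ h ∈ Finset.range i, (θs h - θs (d - h)) / (θs 0 - θs d))) /
          (θs (i - 1) - θs d)) ∧
    (∀ i, i + 1 ≤ d →
      θ i = θ d +
        (φ (i + 1) - φp 1 * (∑ h ∈ Finset.range (i + 1), (θs h - θs (d - h)) / (θs 0 - θs d))) /
          (θs (i + 1) - θs 0)) := by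
  obtain ⟨hφ, hdist, h3, h4, h5⟩ := hpa
  obtain ⟨β, h5⟩ := h5
  have hc0 : θ 0 - θ d ≠ 0 :=
    sub_ne_zero.mpr (hdist 0 d (by omega) le_rfl (by omega)).1
  have hcs0 : θs 0 - θs d ≠ 0 :=
    sub_ne_zero.mpr (hdist 0 d (by omega) le_rfl (by omega)).2
  have hrecθ : ∀ i, 2 ≤ i → i + 1 ≤ d → θ (i-2) - θ (i+1) = β * (θ (i-1) - θ i) := by
    intro i h2 hi
    have hne : θ (i-1) - θ i ≠ 0 :=
      sub_ne_zero.mpr ((hdist (i-1) i (by omega) (by omega) (by omega)).1)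
    have h := (h5 i h2 hi).1
    rwa [div_eq_iff hne] at h
  have hrecθs : ∀ i, 2 ≤ i → i + 1 ≤ d → θs (i-2) - θs (i+1) = β * (θs (i-1) - θs i) := by
    intro i h2 hi
    have hne : θs (i-1) - θs i ≠ 0 :=
      sub_ne_zero.mpr ((hdist (i-1) i (by omega) (by omega) (by omega)).2)
    have h := (h5 i h2 hi).2
    rwa [div_eq_iff hne] at h
  -- step expansion for a β-recurrent sequence
  have F1 : ∀ f : ℕ → K,
      (∀ i, 2 ≤ i → i + 1 ≤ d → f (i-2) - f (i+1) = β * (f (i-1) - f i)) →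
      ∀ n, n + 1 ≤ d →
        f n - f (n+1) = (f 1 - f 2) * uuF (β-1) n - (f 0 - f 1) * uvF (β-1) n := by
    intro f hf
    refine two_step ?_ ?_ ?_
    · intro _
      rw [uu_zero, uv_zero]
      ring
    · intro _
      rw [show uuF (β-1) 1 = (β-1) * uuF (β-1) 0 - uvF (β-1) 0 from rfl,
          show uvF (β-1) 1 = uuF (β-1) 0 from rfl, uu_zero, uv_zero]
      ring
    · intro n ihn ihn1 hn
      have h5' := hf (n+1+1) (by omega) (by omega)
      rw [show n+1+1-2 = n by omega, show n+1+1-1 = n+1 by omega] at h5'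
      have e0 := ihn (by omega)
      have e1 := ihn1 (by omega)
      simp only [uu_succ, uv_succ] at e1 ⊢
      linear_combination h5' - e0 + (β-1) * e1
  have Fθ := F1 θ hrecθ
  have Fθs := F1 θs hrecθs
  have Da : ∀ x, x ≤ d →
      θ 0 - θ x = (θ 1 - θ 2) * aaF (β-1) x - (θ 0 - θ 1) * bbF (β-1) x := by
    intro x
    induction x with
    | zero => intro _; rw [aa_zero, bb_zero]; ring
    | succ m ih =>
      intro hm
      have e1 := ih (by omega)
      have e2 := Fθ m hm
      rw [aa_succ, bb_succ]
      linear_combination e1 + e2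
  have Db : ∀ x, x ≤ d →
      θs 0 - θs x = (θs 1 - θs 2) * aaF (β-1) x - (θs 0 - θs 1) * bbF (β-1) x := by
    intro x
    induction x with
    | zero => intro _; rw [aa_zero, bb_zero]; ring
    | succ m ih =>
      intro hm
      have e1 := ih (by omega)
      have e2 := Fθs m hm
      rw [aa_succ, bb_succ]
      linear_combination e1 + e2
  -- expansion of the basic sums
  have hAex : ∀ f : ℕ → K,
      (∀ x, x ≤ d → f 0 - f x = (f 1 - f 2) * aaF (β-1) x - (f 0 - f 1) * bbF (β-1) x) →
      ∀ m, m ≤ d →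
      ∑ h ∈ range m, (f h - f (d-h)) =
        (f 1 - f 2) * (∑ h ∈ range m, (aaF (β-1) (d-h) - aaF (β-1) h))
          - (f 0 - f 1) * (∑ h ∈ range m, (bbF (β-1) (d-h) - bbF (β-1) h)) := by
    intro f hDa m hm
    rw [Finset.mul_sum, Finset.mul_sum, ← Finset.sum_sub_distrib]
    refine Finset.sum_congr rfl fun h hh => ?_
    have h1 : h ≤ d := by
      have := Finset.mem_range.mp hh
      omega
    have e1 := hDa h h1
    have e2 := hDa (d-h) (by omega)
    linear_combination e2 - e1
  have hJt : ∀ h, h ≤ d →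
      aaF (β-1) d * (bbF (β-1) (d-h) - bbF (β-1) h)
        = bbF (β-1) d * (aaF (β-1) (d-h) - aaF (β-1) h) := by
    intro h hh
    have e : h + (d - h) = d := by omega
    have jj := PAJ (β-1) h (d-h)
    rw [e] at jj
    linear_combination (-1 : K) * jj
  have hIbS : ∀ m, m ≤ d →
      aaF (β-1) d * (∑ h ∈ range m, (bbF (β-1) (d-h) - bbF (β-1) h))
        = bbF (β-1) d * (∑ h ∈ range m, (aaF (β-1) (d-h) - aaF (β-1) h)) := by
    intro m hm
    rw [Finset.mul_sum, Finset.mul_sum]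
    refine Finset.sum_congr rfl fun h hh => ?_
    refine hJt h ?_
    have := Finset.mem_range.mp hh
    omega
  -- the fundamental sum equality (ϑ-symmetry)
  have hsum : ∀ m, m ≤ d →
      ∑ h ∈ range m, (θ h - θ (d-h)) / (θ 0 - θ d)
        = ∑ h ∈ range m, (θs h - θs (d-h)) / (θs 0 - θs d) := by
    intro m hm
    rw [← Finset.sum_div, ← Finset.sum_div, div_eq_div_iff hc0 hcs0]
    have hA := hAex θ Da m hm
    have hB := hAex θs Db m hm
    have hIb := hIbS m hm
    have hdd := Da d le_rfl
    have hsd := Db d le_rfl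
    linear_combination (θs 0 - θs d) * hA - (θ 0 - θ d) * hB
      + ((θ 1 - θ 2) * (∑ h ∈ range m, (aaF (β-1) (d-h) - aaF (β-1) h))
          - (θ 0 - θ 1) * (∑ h ∈ range m, (bbF (β-1) (d-h) - bbF (β-1) h))) * hsd
      - ((θs 1 - θs 2) * (∑ h ∈ range m, (aaF (β-1) (d-h) - aaF (β-1) h))
          - (θs 0 - θs 1) * (∑ h ∈ range m, (bbF (β-1) (d-h) - bbF (β-1) h))) * hdd
      + ((θ 1 - θ 2) * (θs 0 - θs 1) - (θ 0 - θ 1) * (θs 1 - θs 2)) * hIb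
  -- telescoping sums
  have hXad : ∑ h ∈ range d, (aaF (β-1) (d-h) - aaF (β-1) h) = aaF (β-1) d := by
    have r1 : ∑ h ∈ range d, aaF (β-1) (d-h) = ∑ h ∈ range d, aaF (β-1) (h+1) := by
      calc ∑ h ∈ range d, aaF (β-1) (d-h)
          = ∑ h ∈ range d, aaF (β-1) (d-1-h+1) :=
            Finset.sum_congr rfl fun h hh => by
              have := Finset.mem_range.mp hh
              congr 1
              omega
        _ = ∑ h ∈ range d, aaF (β-1) (h+1) :=
            Finset.sum_range_reflect (fun h => aaF (β-1) (h+1)) d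
    have r2 := Finset.sum_range_sub (aaF (β-1)) d
    rw [Finset.sum_sub_distrib] at r2
    rw [Finset.sum_sub_distrib, r1, aa_zero] at *
    linear_combination r2
  have hXbd : ∑ h ∈ range d, (bbF (β-1) (d-h) - bbF (β-1) h) = bbF (β-1) d := by
    have r1 : ∑ h ∈ range d, bbF (β-1) (d-h) = ∑ h ∈ range d, bbF (β-1) (h+1) := by
      calc ∑ h ∈ range d, bbF (β-1) (d-h)
          = ∑ h ∈ range d, bbF (β-1) (d-1-h+1) :=
            Finset.sum_congr rfl fun h hh => by
              have := Finset.mem_range.mp hh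
              congr 1
              omega
        _ = ∑ h ∈ range d, bbF (β-1) (h+1) :=
            Finset.sum_range_reflect (fun h => bbF (β-1) (h+1)) d
    have r2 := Finset.sum_range_sub (bbF (β-1)) d
    rw [Finset.sum_sub_distrib] at r2
    rw [Finset.sum_sub_distrib, r1, bb_zero] at *
    linear_combination r2
  have hnum_d : ∑ h ∈ range d, (θ h - θ (d-h)) = θ 0 - θ d := by
    rw [hAex θ Da d le_rfl, hXad, hXbd]
    exact (Da d le_rfl).symm
  have hΘd : ∑ h ∈ range d, (θ h - θ (d-h)) / (θ 0 - θ d) = 1 := by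
    rw [← Finset.sum_div, hnum_d, div_self hc0]
  -- the Ia sum identity
  have hIaS : ∀ m, m + 1 ≤ d →
      ∑ h ∈ range (m+1), (aaF (β-1) (d-h) - aaF (β-1) h)
        = aaF (β-1) (m+1) * (bbF (β-1) d - bbF (β-1) m)
          - bbF (β-1) (m+1) * (aaF (β-1) d - aaF (β-1) m) := by
    intro m
    induction m with
    | zero =>
      intro _
      rw [Finset.sum_range_one, Nat.sub_zero,
          show aaF (β-1) 1 = aaF (β-1) 0 + uuF (β-1) 0 from rfl,
          show bbF (β-1) 1 = bbF (β-1) 0 + uvF (β-1) 0 from rfl,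
          aa_zero, bb_zero, uu_zero, uv_zero]
      ring
    | succ n ih =>
      intro hm
      rw [Finset.sum_range_succ, ih (by omega)]
      obtain ⟨j, hj⟩ : ∃ j, d = n + j + 1 + 1 := ⟨d - n - 2, by omega⟩
      rw [show d - (n+1) = j + 1 by omega, hj]
      linear_combination (-1 : K) * PAE (β-1) n j
  constructor
  · -- part 1
    intro i hi1 hid
    obtain ⟨m, rfl⟩ : ∃ m, i = m + 1 := ⟨i - 1, by omega⟩
    simp only [Nat.add_sub_cancel]
    set V := ∑ h ∈ range (m+1), (θs h - θs (d - h)) / (θs 0 - θs d) with hVdef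
    have hneM : θs m - θs d ≠ 0 :=
      sub_ne_zero.mpr ((hdist m d (by omega) le_rfl (by omega)).2)
    have key : φ (m+1) - φp d * V = (θ (m+1) - θ 0) * (θs m - θs d) := by
      apply mul_right_cancel₀ hc0
      have hSnum := hAex θ Da (m+1) hid
      have hSc0 : (∑ h ∈ range (m+1), (θ h - θ (d-h)) / (θ 0 - θ d)) * (θ 0 - θ d)
          = (θ 1 - θ 2) * (∑ h ∈ range (m+1), (aaF (β-1) (d-h) - aaF (β-1) h))
            - (θ 0 - θ 1) * (∑ h ∈ range (m+1), (bbF (β-1) (d-h) - bbF (β-1) h)) := by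
        rw [← Finset.sum_div, div_mul_cancel₀ _ hc0, hSnum]
      have hvc0 : V * (θ 0 - θ d)
          = (θ 1 - θ 2) * (∑ h ∈ range (m+1), (aaF (β-1) (d-h) - aaF (β-1) h))
            - (θ 0 - θ 1) * (∑ h ∈ range (m+1), (bbF (β-1) (d-h) - bbF (β-1) h)) := by
        rw [hVdef, ← hsum (m+1) hid]
        exact hSc0
      have h3i := h3 (m+1) (by omega) hid
      simp only [Nat.add_sub_cancel] at h3i
      have h3i' : φ (m+1) * (θ 0 - θ d)
          = φp 1 * ((θ 1 - θ 2) * (∑ h ∈ range (m+1), (aaF (β-1) (d-h) - aaF (β-1) h))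
              - (θ 0 - θ 1) * (∑ h ∈ range (m+1), (bbF (β-1) (d-h) - bbF (β-1) h)))
            + (θs (m+1) - θs 0) * (θ m - θ d) * (θ 0 - θ d) := by
        rw [h3i]
        linear_combination φp 1 * hSc0
      have h4d := h4 d (by omega) le_rfl
      rw [show d - d + 1 = 1 by omega, hΘd] at h4d
      have h41 := h4 1 le_rfl hd
      rw [show d - 1 + 1 = d by omega] at h41
      have hΘ1 : ∑ h ∈ range 1, (θ h - θ (d-h)) / (θ 0 - θ d) = 1 := by
        rw [Finset.sum_range_one, Nat.sub_zero, div_self hc0]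
      rw [hΘ1] at h41
      have hIa := hIaS m hid
      have hIb := hIbS (m+1) hid
      -- explicit expansions of the θ-values
      have hTi : θ (m+1) = θ 0 - ((θ 1 - θ 2) * aaF (β-1) (m+1) - (θ 0 - θ 1) * bbF (β-1) (m+1)) := by
        linear_combination (-1 : K) * Da (m+1) hid
      have hTm : θ m = θ 0 - ((θ 1 - θ 2) * aaF (β-1) m - (θ 0 - θ 1) * bbF (β-1) m) := by
        linear_combination (-1 : K) * Da m (by omega)
      have hTd : θ d = θ 0 - ((θ 1 - θ 2) * aaF (β-1) d - (θ 0 - θ 1) * bbF (β-1) d) := by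
        linear_combination (-1 : K) * Da d le_rfl
      have hSi : θs (m+1) = θs 0 - ((θs 1 - θs 2) * aaF (β-1) (m+1) - (θs 0 - θs 1) * bbF (β-1) (m+1)) := by
        linear_combination (-1 : K) * Db (m+1) hid
      have hSm : θs m = θs 0 - ((θs 1 - θs 2) * aaF (β-1) m - (θs 0 - θs 1) * bbF (β-1) m) := by
        linear_combination (-1 : K) * Db m (by omega)
      have hSd : θs d = θs 0 - ((θs 1 - θs 2) * aaF (β-1) d - (θs 0 - θs 1) * bbF (β-1) d) := by
        linear_combination (-1 : K) * Db d le_rfl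
      rw [hTi, hTd, hSm, hSd]
      rw [hTm, hTd, hSi] at h3i'
      rw [hTd] at h41
      rw [hSd] at h4d
      rw [hTd] at hvc0
      linear_combination h3i' - φp d * hvc0
        + ((θ 1 - θ 2) * (∑ h ∈ range (m+1), (aaF (β-1) (d-h) - aaF (β-1) h))
            - (θ 0 - θ 1) * (∑ h ∈ range (m+1), (bbF (β-1) (d-h) - bbF (β-1) h))) * h41
        - ((θ 1 - θ 2) * (∑ h ∈ range (m+1), (aaF (β-1) (d-h) - aaF (β-1) h))
            - (θ 0 - θ 1) * (∑ h ∈ range (m+1), (bbF (β-1) (d-h) - bbF (β-1) h))) * h4d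
        + (((θ 1 - θ 2) * (θs 0 - θs 1) - (θ 0 - θ 1) * (θs 1 - θs 2))
            * ((θ 1 - θ 2) * aaF (β-1) d - (θ 0 - θ 1) * bbF (β-1) d)) * hIa
        - (((θ 1 - θ 2) * (θs 0 - θs 1) - (θ 0 - θ 1) * (θs 1 - θs 2)) * (θ 0 - θ 1)) * hIb
    rw [key, mul_div_assoc, div_self hneM, mul_one]
    ring
  · -- part 2
    intro i hi
    have h3i := h3 (i+1) (by omega) hi
    simp only [Nat.add_sub_cancel] at h3i
    rw [hsum (i+1) hi] at h3i
    have hne : θs (i+1) - θs 0 ≠ 0 :=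
      sub_ne_zero.mpr ((hdist (i+1) 0 hi (by omega) (by omega)).2)
    rw [h3i, add_sub_cancel_left, mul_comm (θs (i+1) - θs 0) (θ i - θ d),
        mul_div_assoc, div_self hne, mul_one]
    ring
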